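/- arXiv:2002.04413 — 3 statements merged into one kernel-verified Lean document; each statement's English description precedes it below -/
import Mathlib

section
/- If f ∈ L¹(0,∞), then the Cesàro transform Cf lies in the weak-L¹ space and moreover t·μ(t, Cf) → 0 as t → 0⁺, where μ(·, Cf) is the decreasing rearrangement of |Cf|; in particular sup_{t>0} t·μ(t,Cf) ≤ ‖f‖_{L¹}. -/
open MeasureTheory Set

/-- The decreasing rearrangement of `|g|` for a function on `(0,∞)`. -/
noncomputable def mu (g : ℝ → ℝ) (t : ℝ) : ℝ :=
  sInf {s : ℝ | 0 ≤ s ∧ volume {x : ℝ | x ∈ Ioi (0:ℝ) ∧ s < |g x|} ≤ ENNReal.ofReal t}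

lemma mu_aux_le {g : ℝ → ℝ} {t s : ℝ} (hs : 0 ≤ s)
    (h : volume {x : ℝ | x ∈ Ioi (0:ℝ) ∧ s < |g x|} ≤ ENNReal.ofReal t) :
    sInf {s : ℝ | 0 ≤ s ∧ volume {x : ℝ | x ∈ Ioi (0:ℝ) ∧ s < |g x|} ≤ ENNReal.ofReal t} ≤ s :=
  csInf_le ⟨0, fun _ hx => hx.1⟩ ⟨hs, h⟩

/-- If `f ∈ L¹(0,∞)`, then `Cf` lies in weak-`L¹`, with
`t·μ(t,Cf) → 0` as `t → 0⁺`, and `sup_{t>0} t·μ(t,Cf) ≤ ‖f‖₁`. -/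
theorem cesaro_weakL1 (f : ℝ → ℝ) (hf : IntegrableOn f (Ioi (0:ℝ))) :
    Filter.Tendsto
        (fun t : ℝ => t * mu (fun u : ℝ => (1 / u) * ∫ s in Ioc (0:ℝ) u, f s) t)
        (nhdsWithin 0 (Ioi (0:ℝ))) (nhds 0)
    ∧ ∀ t : ℝ, 0 < t →
        t * mu (fun u : ℝ => (1 / u) * ∫ s in Ioc (0:ℝ) u, f s) t
          ≤ ∫ s in Ioi (0:ℝ), |f s| := by
  set g : ℝ → ℝ := fun u : ℝ => (1 / u) * ∫ s in Ioc (0:ℝ) u, f s with hg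
  set A : ℝ := ∫ s in Ioi (0:ℝ), |f s| with hAdef
  have hfa : IntegrableOn (fun x => |f x|) (Ioi (0:ℝ)) := hf.abs
  have hA0 : 0 ≤ A := setIntegral_nonneg measurableSet_Ioi fun x _ => abs_nonneg _
  -- pointwise bound
  have key : ∀ u : ℝ, 0 < u → |g u| ≤ (1/u) * ∫ s in Ioc (0:ℝ) u, |f s| := by
    intro u hu
    have h1 : (0:ℝ) ≤ 1/u := by positivity
    rw [hg]
    simp only
    rw [abs_mul, abs_of_nonneg h1]
    refine mul_le_mul_of_nonneg_left ?_ h1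
    calc |∫ s in Ioc (0:ℝ) u, f s| = ‖∫ s in Ioc (0:ℝ) u, f s‖ := (Real.norm_eq_abs _).symm
    _ ≤ ∫ s in Ioc (0:ℝ) u, ‖f s‖ := norm_integral_le_integral_norm _
    _ = ∫ s in Ioc (0:ℝ) u, |f s| := by simp [Real.norm_eq_abs]
  have hIle : ∀ u : ℝ, 0 < u → (∫ s in Ioc (0:ℝ) u, |f s|) ≤ A := by
    intro u hu
    exact setIntegral_mono_set hfa (Filter.Eventually.of_forall fun x => abs_nonneg _)
      (HasSubset.Subset.eventuallyLE Ioc_subset_Ioi_self)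
  have hInn : ∀ u : ℝ, 0 < u → 0 ≤ ∫ s in Ioc (0:ℝ) u, |f s| := by
    intro u hu
    exact setIntegral_nonneg measurableSet_Ioc fun x _ => abs_nonneg _
  -- weak-L1 bound: part 2
  have bound2 : ∀ t : ℝ, 0 < t →
      volume {x : ℝ | x ∈ Ioi (0:ℝ) ∧ A/t < |g x|} ≤ ENNReal.ofReal t := by
    intro t ht
    have hsub2 : {x : ℝ | x ∈ Ioi (0:ℝ) ∧ A/t < |g x|} ⊆ Ioo (0:ℝ) t := by
      rintro x ⟨hx, hlt⟩
      have hx' : (0:ℝ) < x := hx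
      have h1 : |g x| ≤ (1/x) * A :=
        (key x hx').trans (mul_le_mul_of_nonneg_left (hIle x hx') (by positivity))
      have h2 : A/t < A/x := by
        calc A/t < |g x| := hlt
        _ ≤ (1/x) * A := h1
        _ = A/x := by ring
      have hApos : 0 < A := by
        by_contra h
        have : A = 0 := le_antisymm (not_lt.mp h) hA0
        rw [this, zero_div, zero_div] at h2; exact lt_irrefl 0 h2
      have hxt : x < t := by
        rw [div_lt_div_iff₀ ht hx'] at h2
        exact (mul_lt_mul_iff_right₀ hApos).mp h2
      exact mem_Ioo.mpr ⟨hx', hxt⟩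
    calc volume {x : ℝ | x ∈ Ioi (0:ℝ) ∧ A/t < |g x|} ≤ volume (Ioo (0:ℝ) t) :=
      measure_mono hsub2
    _ = ENNReal.ofReal t := by rw [Real.volume_Ioo, sub_zero]
  have muS_ne : ∀ t : ℝ, 0 < t →
      {s : ℝ | 0 ≤ s ∧ volume {x : ℝ | x ∈ Ioi (0:ℝ) ∧ s < |g x|} ≤ ENNReal.ofReal t}.Nonempty :=
    fun t ht => ⟨A/t, div_nonneg hA0 ht.le, bound2 t ht⟩
  have mu_nonneg : ∀ t : ℝ, 0 < t → 0 ≤ mu g t :=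
    fun t ht => le_csInf (muS_ne t ht) fun _ hx => hx.1
  have part2 : ∀ t : ℝ, 0 < t → t * mu g t ≤ A := by
    intro t ht
    have h1 : mu g t ≤ A/t := mu_aux_le (div_nonneg hA0 ht.le) (bound2 t ht)
    calc t * mu g t ≤ t * (A/t) := mul_le_mul_of_nonneg_left h1 ht.le
    _ = A := by field_simp
  refine ⟨?_, part2⟩
  -- tendsto part
  have core : ∀ ε : ℝ, 0 < ε → ∀ δ : ℝ, 0 < δ →
      (∀ u : ℝ, 0 < u → u ≤ δ → (∫ s in Ioc (0:ℝ) u, |f s|) ≤ ε) →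
      ∀ s : ℝ, 0 < s → A < s * δ →
      volume {x : ℝ | x ∈ Ioi (0:ℝ) ∧ s < |g x|} ≤ ENNReal.ofReal (ε/s) := by
    intro ε hε δ hδ hsmall s hs hAs
    have hsub2 : {x : ℝ | x ∈ Ioi (0:ℝ) ∧ s < |g x|} ⊆ Ioo (0:ℝ) (ε/s) := by
      rintro x ⟨hx, hlt⟩
      have hx' : (0:ℝ) < x := hx
      have h1 := key x hx'
      have hxδ : x ≤ δ := by
        by_contra h
        push_neg at h
        have h2 : |g x| ≤ (1/x) * A :=
          h1.trans (mul_le_mul_of_nonneg_left (hIle x hx') (by positivity))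
        have h3 : (1/x) * A < s := by
          rw [one_div, inv_mul_lt_iff₀ hx']
          calc A < s * δ := hAs
          _ ≤ s * x := mul_le_mul_of_nonneg_left h.le hs.le
          _ = x * s := mul_comm _ _
        linarith [hlt]
      have h2 : |g x| ≤ ε/x := by
        calc |g x| ≤ (1/x) * ∫ s in Ioc (0:ℝ) x, |f s| := h1
        _ ≤ (1/x) * ε := mul_le_mul_of_nonneg_left (hsmall x hx' hxδ) (by positivity)
        _ = ε/x := by ring
      have h3 : s < ε/x := lt_of_lt_of_le hlt h2
      have h4 : x < ε/s := by
        rw [lt_div_iff₀ hx'] at h3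
        rw [lt_div_iff₀ hs]
        linarith [h3]
      exact mem_Ioo.mpr ⟨hx', h4⟩
    calc volume {x : ℝ | x ∈ Ioi (0:ℝ) ∧ s < |g x|} ≤ volume (Ioo (0:ℝ) (ε/s)) :=
      measure_mono hsub2
    _ = ENNReal.ofReal (ε/s) := by rw [Real.volume_Ioo, sub_zero]
  -- continuity of the integral at 0
  have htint : Filter.Tendsto (fun u : ℝ => ∫ s in Ioc (0:ℝ) u, |f s|)
      (nhdsWithin 0 (Ioi (0:ℝ))) (nhds 0) := by
    have h := hfa.tendsto_setIntegral_nhds_zero (l := nhdsWithin 0 (Ioi (0:ℝ)))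
      (s := fun u => Ioc (0:ℝ) u) ?_
    · convert h using 2 with u
      rw [Measure.restrict_restrict measurableSet_Ioc,
        inter_eq_self_of_subset_left Ioc_subset_Ioi_self]
    · have hub : ∀ u : ℝ, (volume.restrict (Ioi (0:ℝ))) (Ioc (0:ℝ) u) ≤ ENNReal.ofReal u := by
        intro u
        rw [Measure.restrict_apply measurableSet_Ioc]
        exact le_trans (measure_mono inter_subset_left) (by rw [Real.volume_Ioc]; simp)
      have h2 : Filter.Tendsto (fun u : ℝ => ENNReal.ofReal u)
          (nhdsWithin 0 (Ioi (0:ℝ))) (nhds 0) := by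
        have := ENNReal.tendsto_ofReal (a := (0:ℝ))
          (Filter.tendsto_id.mono_left (nhdsWithin_le_nhds (s := Ioi (0:ℝ))))
        simpa using this
      exact tendsto_of_tendsto_of_tendsto_of_le_of_le tendsto_const_nhds h2
        (fun u => zero_le) hub
  -- conclude
  rw [Metric.tendsto_nhdsWithin_nhds]
  intro ε hε
  have hε2 : 0 < ε/2 := by linarith
  have hmem : {u : ℝ | (∫ s in Ioc (0:ℝ) u, |f s|) < ε/2} ∈ nhdsWithin 0 (Ioi (0:ℝ)) :=
    htint (Iio_mem_nhds hε2)
  rw [mem_nhdsGT_iff_exists_Ioo_subset] at hmem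
  obtain ⟨δ, hδmem, hsub⟩ := hmem
  have hδpos : (0:ℝ) < δ := hδmem
  set δ' : ℝ := δ/2 with hδ'
  have hδ'pos : 0 < δ' := by positivity
  have hsmall : ∀ u : ℝ, 0 < u → u ≤ δ' → (∫ s in Ioc (0:ℝ) u, |f s|) ≤ ε/2 := by
    intro u hu huδ
    exact (hsub ⟨hu, lt_of_le_of_lt huδ (by linarith)⟩).le
  set B : ℝ := (A + 1)/δ' with hB
  have hBpos : 0 < B := by positivity
  refine ⟨min (ε/2 * δ'/(A+1)) 1, by positivity, ?_⟩
  intro t ht hdist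
  have ht' : (0:ℝ) < t := ht
  have htlt : t < ε/2 * δ'/(A+1) := by
    rw [Real.dist_eq, sub_zero, abs_of_pos ht'] at hdist
    exact lt_of_lt_of_le hdist (min_le_left _ _)
  set s : ℝ := max ((ε/2)/t) B with hsdef
  have hspos : 0 < s := lt_of_lt_of_le hBpos (le_max_right _ _)
  have hsA : A < s * δ' := by
    have : B * δ' = A + 1 := by rw [hB]; field_simp
    calc A < A + 1 := by linarith
    _ = B * δ' := this.symm
    _ ≤ s * δ' := mul_le_mul_of_nonneg_right (le_max_right _ _) hδ'pos.le
  have hmeas := core (ε/2) hε2 δ' hδ'pos hsmall s hspos hsA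
  have hεs : (ε/2)/s ≤ t := by
    have h1 : (ε/2)/t ≤ s := le_max_left _ _
    rw [div_le_iff₀ hspos]
    rw [div_le_iff₀ ht'] at h1
    calc ε/2 ≤ s * t := h1
    _ = t * s := mul_comm _ _
  have hmu : mu g t ≤ s :=
    mu_aux_le hspos.le (hmeas.trans (ENNReal.ofReal_le_ofReal hεs))
  have hts : t * s ≤ ε/2 := by
    rw [hsdef, mul_max_of_nonneg _ _ ht'.le]
    have h1 : t * ((ε/2)/t) = ε/2 := by
      rw [mul_comm, div_mul_cancel₀ _ (ne_of_gt ht')]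
    have h2 : t * B ≤ ε/2 := by
      rw [lt_div_iff₀ (by positivity : (0:ℝ) < A + 1)] at htlt
      rw [hB, ← mul_div_assoc, div_le_iff₀ hδ'pos]
      linarith [htlt]
    rw [h1]
    exact max_le le_rfl h2
  rw [Real.dist_eq, sub_zero, abs_of_nonneg (mul_nonneg ht'.le (mu_nonneg t ht'))]
  calc t * mu g t ≤ t * s := mul_le_mul_of_nonneg_left hmu ht'.le
  _ ≤ ε/2 := hts
  _ < ε := by linarith
end

section
/- Let φ(t) = t·log(1 + 1/t) for t > 0. Then there exists an absolute constant c > 0 such that for all t > 0, ∫ₜ^∞ φ(s)/s² ds ≤ c·log²(1 + 1/√t), i.e. ∫ₜ^∞ (1/s)·log(1 + 1/s) ds ≤ c·log²(1 + 1/√t). -/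
open MeasureTheory Set

private lemma log_add_one_le {x : ℝ} (hx : 0 ≤ x) : Real.log (1 + x) ≤ x := by
  have := Real.log_le_sub_one_of_pos (x := 1 + x) (by linarith)
  linarith

private lemma le_log_add_one {x : ℝ} (hx : 0 ≤ x) : x / (1 + x) ≤ Real.log (1 + x) := by
  have h1 : (0:ℝ) < 1 + x := by linarith
  have := Real.one_sub_inv_le_log_of_pos h1
  have h2 : 1 - (1 + x)⁻¹ = x / (1 + x) := by field_simp; ring
  linarith [h2 ▸ this]

private lemma hasDerivAt_aux {x : ℝ} (hx : 0 < x) :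
    HasDerivAt (fun y : ℝ => -(Real.log (1 + 1 / Real.sqrt y)) ^ 2)
      (Real.log (1 + 1 / Real.sqrt x) / (x * (Real.sqrt x + 1))) x := by
  have hr : 0 < Real.sqrt x := Real.sqrt_pos.2 hx
  have hrx : Real.sqrt x ^ 2 = x := Real.sq_sqrt hx.le
  have h1 : HasDerivAt Real.sqrt (1 / (2 * Real.sqrt x)) x := Real.hasDerivAt_sqrt hx.ne'
  have h2 : HasDerivAt (fun y => 1 + (Real.sqrt y)⁻¹)
      (-(1 / (2 * Real.sqrt x)) / Real.sqrt x ^ 2) x := (h1.inv hr.ne').const_add 1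
  have hpos : (0:ℝ) < 1 + (Real.sqrt x)⁻¹ := by positivity
  have h3 := (h2.log hpos.ne').pow 2
  have h4 : HasDerivAt (fun y => -(Real.log (1 + (Real.sqrt y)⁻¹)) ^ 2) _ x := h3.neg
  simp only [one_div] at h4 ⊢
  convert h4 using 1
  rw [← hrx]
  have h5 : Real.sqrt (Real.sqrt x ^ 2) = Real.sqrt x := by rw [hrx]
  rw [h5]
  field_simp
  ring

private lemma pointwise_aux {s : ℝ} (hs : 0 < s) :
    (1 / s) * Real.log (1 + 1 / s) ≤
      4 * (Real.log (1 + 1 / Real.sqrt s) / (s * (Real.sqrt s + 1))) := by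
  have hu : 0 < Real.sqrt s := Real.sqrt_pos.2 hs
  set u := Real.sqrt s with hudef
  have hus : u ^ 2 = s := Real.sq_sqrt hs.le
  have h1s : (0:ℝ) ≤ 1 / s := by positivity
  have h1u : (0:ℝ) ≤ 1 / u := by positivity
  have key : Real.log (1 + 1 / s) * (u + 1) ≤ 4 * Real.log (1 + 1 / u) := by
    rcases le_total u 1 with hu1 | hu1
    · -- small u : log(1+1/s) ≤ 2 log(1+1/u), u+1 ≤ 2
      have hsq : 1 + 1 / s ≤ (1 + 1 / u) ^ 2 := by
        rw [← hus]
        have h0 : 0 < 1 / u := one_div_pos.2 hu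
        have : 1 / u ^ 2 = (1 / u) ^ 2 := by field_simp
        nlinarith
      have hlog : Real.log (1 + 1 / s) ≤ 2 * Real.log (1 + 1 / u) := by
        calc Real.log (1 + 1 / s) ≤ Real.log ((1 + 1 / u) ^ 2) :=
              Real.log_le_log (by linarith) hsq
          _ = 2 * Real.log (1 + 1 / u) := by
              rw [Real.log_pow]; push_cast; ring
      have hlognn : 0 ≤ Real.log (1 + 1 / u) := Real.log_nonneg (by linarith)
      nlinarith
    · -- large u : log(1+1/s) ≤ 1/u², 4 log(1+1/u) ≥ 4/(u+1)
      have hup : Real.log (1 + 1 / s) ≤ 1 / u ^ 2 := by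
        rw [← hus] at h1s ⊢; exact log_add_one_le h1s
      have hlow : (1 / u) / (1 + 1 / u) ≤ Real.log (1 + 1 / u) := le_log_add_one h1u
      have hlow' : 1 / (u + 1) ≤ Real.log (1 + 1 / u) := by
        have : (1 / u) / (1 + 1 / u) = 1 / (u + 1) := by field_simp
        linarith [this ▸ hlow]
      have h2 : (u + 1) / u ^ 2 ≤ 4 / (u + 1) := by
        rw [div_le_div_iff₀ (by positivity) (by linarith)]
        nlinarith
      have hlognn : 0 ≤ Real.log (1 + 1 / s) := Real.log_nonneg (by linarith)
      calc Real.log (1 + 1 / s) * (u + 1) ≤ (1 / u ^ 2) * (u + 1) := by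
            nlinarith
        _ = (u + 1) / u ^ 2 := by ring
        _ ≤ 4 / (u + 1) := h2
        _ ≤ 4 * Real.log (1 + 1 / u) := by
            rw [div_le_iff₀ (by linarith : (0:ℝ) < u + 1)]
            have hm := mul_le_mul_of_nonneg_right hlow' (by linarith : (0:ℝ) ≤ u + 1)
            have he : (1 / (u + 1)) * (u + 1) = 1 := by field_simp
            nlinarith
  rw [show (1:ℝ) / s * Real.log (1 + 1 / s) = Real.log (1 + 1 / s) / s by ring,
    ← mul_div_assoc, div_le_div_iff₀ hs (by positivity)]
  calc Real.log (1 + 1 / s) * (s * (u + 1)) = (Real.log (1 + 1 / s) * (u + 1)) * s := by ring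
    _ ≤ (4 * Real.log (1 + 1 / u)) * s := by nlinarith
    _ = 4 * Real.log (1 + 1 / u) * s := by ring

/-- There is an absolute constant `c > 0` such that for all `t > 0`,
`∫ₜ^∞ (1/s)·log(1 + 1/s) ds ≤ c·log²(1 + 1/√t)`. -/
theorem integral_log_upper_bound :
    ∃ c : ℝ, 0 < c ∧ ∀ t : ℝ, 0 < t →
      (∫ s in Ioi t, (1 / s) * Real.log (1 + 1 / s))
        ≤ c * (Real.log (1 + 1 / Real.sqrt t)) ^ 2 := by
  refine ⟨4, by norm_num, fun t ht => ?_⟩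
  set g' : ℝ → ℝ := fun s => Real.log (1 + 1 / Real.sqrt s) / (s * (Real.sqrt s + 1)) with hg'
  have hderiv : ∀ x ∈ Ici t, HasDerivAt (fun y : ℝ => -(Real.log (1 + 1 / Real.sqrt y)) ^ 2)
      (g' x) x := fun x hx => hasDerivAt_aux (lt_of_lt_of_le ht hx)
  have hpos : ∀ x ∈ Ioi t, 0 ≤ g' x := by
    intro x hx
    have hx0 : 0 < x := ht.trans hx
    have h1 : (0:ℝ) ≤ Real.log (1 + 1 / Real.sqrt x) := Real.log_nonneg (by
      have : (0:ℝ) ≤ 1 / Real.sqrt x := by positivity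
      linarith)
    positivity
  have htend : Filter.Tendsto (fun y : ℝ => -(Real.log (1 + 1 / Real.sqrt y)) ^ 2)
      Filter.atTop (nhds 0) := by
    have hsq : Filter.Tendsto Real.sqrt Filter.atTop Filter.atTop := by
      apply Filter.tendsto_atTop_atTop.2
      intro b
      refine ⟨(max b 0) ^ 2, fun a ha => (le_max_left b 0).trans ?_⟩
      rw [← Real.sqrt_sq (le_max_right b 0)]
      exact Real.sqrt_le_sqrt ha
    have h1 : Filter.Tendsto (fun y : ℝ => 1 / Real.sqrt y) Filter.atTop (nhds 0) := by
      simp only [one_div]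
      exact hsq.inv_tendsto_atTop
    have h2 : Filter.Tendsto (fun y : ℝ => Real.log (1 + 1 / Real.sqrt y)) Filter.atTop
        (nhds 0) := by
      have := (Real.continuousAt_log (by norm_num : (1:ℝ) + 0 ≠ 0)).tendsto.comp
        ((tendsto_const_nhds.add h1))
      simpa [Function.comp_def] using this
    have := ((h2.pow 2).neg)
    simpa using this
  have hint : ∫ x in Ioi t, g' x = 0 - -(Real.log (1 + 1 / Real.sqrt t)) ^ 2 :=
    integral_Ioi_of_hasDerivAt_of_nonneg' hderiv hpos htend
  have hintg : IntegrableOn g' (Ioi t) :=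
    integrableOn_Ioi_deriv_of_nonneg' hderiv hpos htend
  have hmono : (∫ s in Ioi t, (1 / s) * Real.log (1 + 1 / s)) ≤ ∫ s in Ioi t, 4 * g' s := by
    apply integral_mono_of_nonneg
    · filter_upwards [ae_restrict_mem measurableSet_Ioi] with x hx
      have hx0 : 0 < x := ht.trans hx
      have : (0:ℝ) ≤ Real.log (1 + 1 / x) := Real.log_nonneg (by
        have : (0:ℝ) ≤ 1 / x := by positivity
        linarith)
      positivity
    · exact hintg.const_mul 4
    · filter_upwards [ae_restrict_mem measurableSet_Ioi] with x hx
      exact pointwise_aux (ht.trans hx)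
  calc (∫ s in Ioi t, (1 / s) * Real.log (1 + 1 / s)) ≤ ∫ s in Ioi t, 4 * g' s := hmono
    _ = 4 * ∫ s in Ioi t, g' s := by rw [integral_const_mul]
    _ = 4 * (Real.log (1 + 1 / Real.sqrt t)) ^ 2 := by rw [hint]; ring
end

section
/- Let φ be quasiconcave on (0,∞) with 1/φ locally integrable at 0, and define ψ(t) = t·(∫₀ᵗ ds/φ(s))⁻¹. Then ψ is quasiconcave: ψ(t) > 0 for t > 0, ψ is nondecreasing, and ψ(t)/t is nonincreasing. -/
open MeasureTheory Set

/-- If `φ` is quasiconcave on `(0,∞)` and `1/φ` is locally integrable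
at `0`, then `ψ(t) = t·(∫₀ᵗ ds/φ(s))⁻¹` is quasiconcave. -/
theorem psi_quasiconcave (φ : ℝ → ℝ)
    (hpos : ∀ t ∈ Ioi (0:ℝ), 0 < φ t)
    (hmono : MonotoneOn φ (Ioi (0:ℝ)))
    (hquasi : AntitoneOn (fun t => φ t / t) (Ioi (0:ℝ)))
    (hloc : ∀ t : ℝ, 0 < t → IntegrableOn (fun s => 1 / φ s) (Ioc 0 t)) :
    (∀ t : ℝ, 0 < t → 0 < t * (∫ s in Ioc (0:ℝ) t, 1 / φ s)⁻¹)
    ∧ MonotoneOn (fun t : ℝ => t * (∫ s in Ioc (0:ℝ) t, 1 / φ s)⁻¹) (Ioi (0:ℝ))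
    ∧ AntitoneOn
        (fun t : ℝ => (t * (∫ s in Ioc (0:ℝ) t, 1 / φ s)⁻¹) / t) (Ioi (0:ℝ)) := by
  set F : ℝ → ℝ := fun t => ∫ s in Ioc (0:ℝ) t, 1 / φ s with hF
  -- lower bound: a / φ a ≤ F a
  have hF_lb : ∀ a : ℝ, 0 < a → a / φ a ≤ F a := by
    intro a ha
    have hφa := hpos a ha
    have hconst : ∫ _ in Ioc (0:ℝ) a, (1 / φ a) = a * (1 / φ a) := by
      rw [setIntegral_const]
      simp [Real.volume_Ioc, ha.le]
    have hmono' : ∫ _ in Ioc (0:ℝ) a, (1 / φ a) ≤ F a := by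
      apply setIntegral_mono_on (integrableOn_const (by simp [Real.volume_Ioc]))
        (hloc a ha) measurableSet_Ioc
      intro s hs
      exact one_div_le_one_div_of_le (hpos s hs.1) (hmono hs.1 ha hs.2)
    calc a / φ a = a * (1 / φ a) := by ring
    _ ≤ F a := hconst ▸ hmono'
  have hFpos : ∀ a : ℝ, 0 < a → 0 < F a := fun a ha =>
    lt_of_lt_of_le (div_pos ha (hpos a ha)) (hF_lb a ha)
  -- split of F
  have hsplit : ∀ a b : ℝ, 0 < a → a ≤ b →
      F b = F a + ∫ s in Ioc a b, 1 / φ s := by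
    intro a b ha hab
    have hu : Ioc (0:ℝ) a ∪ Ioc a b = Ioc 0 b := Ioc_union_Ioc_eq_Ioc ha.le hab
    have hint2 : IntegrableOn (fun s => 1 / φ s) (Ioc a b) :=
      (hloc b (lt_of_lt_of_le ha hab)).mono_set (Ioc_subset_Ioc ha.le le_rfl)
    show (∫ s in Ioc (0:ℝ) b, 1 / φ s) = (∫ s in Ioc (0:ℝ) a, 1 / φ s) + ∫ s in Ioc a b, 1 / φ s
    rw [← hu, setIntegral_union (Set.Ioc_disjoint_Ioc_of_le le_rfl) measurableSet_Ioc
      (hloc a ha) hint2]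
  -- upper bound for increment
  have hincr : ∀ a b : ℝ, 0 < a → a ≤ b →
      (∫ s in Ioc a b, 1 / φ s) ≤ (b - a) / φ a := by
    intro a b ha hab
    have hφa := hpos a ha
    have hint2 : IntegrableOn (fun s => 1 / φ s) (Ioc a b) :=
      (hloc b (lt_of_lt_of_le ha hab)).mono_set (Ioc_subset_Ioc ha.le le_rfl)
    have hconst : ∫ _ in Ioc a b, (1 / φ a) = (b - a) * (1 / φ a) := by
      rw [setIntegral_const]
      simp [Real.volume_Ioc, hab]
    have hmono' : (∫ s in Ioc a b, 1 / φ s) ≤ ∫ _ in Ioc a b, (1 / φ a) := by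
      apply setIntegral_mono_on hint2
        (integrableOn_const (by simp [Real.volume_Ioc]))
        measurableSet_Ioc
      intro s hs
      exact one_div_le_one_div_of_le hφa (hmono ha (lt_trans ha hs.1) (le_of_lt hs.1))
    calc (∫ s in Ioc a b, 1 / φ s) ≤ (b - a) * (1 / φ a) := hconst ▸ hmono'
    _ = (b - a) / φ a := by ring
  -- F monotone
  have hFmono : ∀ a b : ℝ, 0 < a → a ≤ b → F a ≤ F b := by
    intro a b ha hab
    rw [hsplit a b ha hab]
    have : 0 ≤ ∫ s in Ioc a b, 1 / φ s := by
      apply setIntegral_nonneg measurableSet_Ioc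
      intro s hs
      exact le_of_lt (div_pos one_pos (hpos s (lt_trans ha hs.1)))
    linarith
  refine ⟨fun t ht => mul_pos ht (inv_pos.2 (hFpos t ht)), ?_, ?_⟩
  · -- monotone
    intro a ha b hb hab
    simp only
    have hFa := hFpos a ha
    have hFb := hFpos b hb
    show a * (F a)⁻¹ ≤ b * (F b)⁻¹
    rw [← div_eq_mul_inv, ← div_eq_mul_inv, div_le_div_iff₀ hFa hFb]
    -- goal: a * F b ≤ b * F a
    have h1 : a * F b = a * F a + a * ∫ s in Ioc a b, 1 / φ s := by
      rw [hsplit a b (mem_Ioi.1 ha) hab]; ring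
    have h2 : a * (∫ s in Ioc a b, 1 / φ s) ≤ a * ((b - a) / φ a) :=
      mul_le_mul_of_nonneg_left (hincr a b ha hab) (le_of_lt ha)
    have h3 : (b - a) * (a / φ a) ≤ (b - a) * F a :=
      mul_le_mul_of_nonneg_left (hF_lb a ha) (by linarith)
    have h4 : a * ((b - a) / φ a) = (b - a) * (a / φ a) := by ring
    nlinarith [h1, h2, h3]
  · -- antitone of ψ t / t = (F t)⁻¹
    intro a ha b hb hab
    simp only
    have ha' : (a:ℝ) ≠ 0 := ne_of_gt ha
    have hb' : (b:ℝ) ≠ 0 := ne_of_gt hb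
    show b * (F b)⁻¹ / b ≤ a * (F a)⁻¹ / a
    rw [mul_div_cancel_left₀ _ hb', mul_div_cancel_left₀ _ ha']
    exact inv_anti₀ (hFpos a ha) (hFmono a b ha hab)
end
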